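/- arXiv:1911.07406 — 3 statements merged into one kernel-verified Lean document; each statement's English description precedes it below -/
import Mathlib

section
/- Let S be a dense subsemigroup of (T,+), e ∈ E(T), (X,⟨T_s⟩_{s∈S}) a dynamical system, and x ∈ X. If there exists an idempotent u in some minimal left ideal of e*_S with T_u(x) = x, then x is a uniformly recurrent point near e. -/
open Filter Topology Set

attribute [local instance] Ultrafilter.add Ultrafilter.addSemigroup

universe u

section NearIdem

variable {T : Type u} [AddSemigroup T] [TopologicalSpace T]

/-- The set of ultrafilters on `S` converging to `e` (denoted `e*_S`). -/
def EStar (S : AddSubsemigroup T) (e : T) : Set (Ultrafilter S) :=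
  {p | ∀ U ∈ nhds e, {s : S | (s : T) ∈ U} ∈ p}

/-- `B ⊆ S` is syndetic near `e`. -/
def SyndeticNear (S : AddSubsemigroup T) (e : T) (B : Set S) : Prop :=
  ∀ U ∈ nhds e, ∃ F : Finset S, (∀ t ∈ F, (t : T) ∈ U) ∧
    ∃ V ∈ nhds e, ∀ s : S, (s : T) ∈ V → ∃ t ∈ F, t + s ∈ B

/-- `A ⊆ S` is topologically piecewise syndetic near `e`. -/
def TopPWSNear (S : AddSubsemigroup T) (e : T) (A : Set S) : Prop :=
  ∀ U ∈ nhds e, ∃ F : Finset S, (∀ t ∈ F, (t : T) ∈ U) ∧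
    ∃ V ∈ nhds e, ∀ G : Finset S, ∀ O ∈ nhds e, ∃ x : S, (x : T) ∈ O ∧
      ∀ g ∈ G, (g : T) ∈ V → ∃ t ∈ F, t + (g + x) ∈ A

/-- Left ideal of a subsemigroup `E` of `βM`. -/
def IsLeftIdealIn {M : Type*} [AddSemigroup M] (E L : Set (Ultrafilter M)) : Prop :=
  L.Nonempty ∧ L ⊆ E ∧ ∀ p ∈ E, ∀ q ∈ L, p + q ∈ L

/-- Minimal left ideal of `E`. -/
def IsMinimalLeftIdealIn {M : Type*} [AddSemigroup M] (E L : Set (Ultrafilter M)) : Prop :=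
  IsLeftIdealIn E L ∧ ∀ L', IsLeftIdealIn E L' → L' ⊆ L → L' = L

/-- The smallest ideal `K(E)`, the union of all minimal left ideals of `E`. -/
def SmallestIdeal {M : Type*} [AddSemigroup M] (E : Set (Ultrafilter M)) : Set (Ultrafilter M) :=
  {p | ∃ L, IsMinimalLeftIdealIn E L ∧ p ∈ L}

/-- `T_p(x) = p`-`lim_(s ∈ S) T_s(x)`. -/
noncomputable def TP {M : Type*} {X : Type*} [TopologicalSpace X]
    (Ts : M → X → X) (p : Ultrafilter M) (x : X) : X :=
  (p.map fun s => Ts s x).lim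

/-- `x` is a uniformly recurrent point near `e`. -/
def UnifRecNear (S : AddSubsemigroup T) (e : T) {X : Type*} [TopologicalSpace X]
    (Ts : S → X → X) (x : X) : Prop :=
  ∀ W ∈ nhds x, SyndeticNear S e {s : S | Ts s x ∈ W}

/-- `x` and `y` are proximal near `e` (characterized via `e*_S`). -/
noncomputable def ProximalNear (S : AddSubsemigroup T) (e : T) {X : Type*} [TopologicalSpace X]
    (Ts : S → X → X) (x y : X) : Prop :=
  ∃ p ∈ EStar S e, TP Ts p x = TP Ts p y

variable [T2Space T]

/-- In a compact Hausdorff space, the orbit map tends to `TP Ts p x` along `p`. -/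
theorem tendsto_TP {M : Type*} {X : Type*} [TopologicalSpace X] [CompactSpace X]
    (Ts : M → X → X) (p : Ultrafilter M) (x : X) :
    Filter.Tendsto (fun s => Ts s x) ↑p (nhds (TP Ts p x)) := by
  rw [Filter.Tendsto, ← Ultrafilter.coe_map]
  exact Ultrafilter.le_nhds_lim _

theorem TP_eq {M : Type*} {X : Type*} [TopologicalSpace X] [CompactSpace X] [T2Space X]
    (Ts : M → X → X) (p : Ultrafilter M) (x : X) {c : X}
    (h : Filter.Tendsto (fun s => Ts s x) ↑p (nhds c)) : TP Ts p x = c :=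
  tendsto_nhds_unique (tendsto_TP Ts p x) h

theorem TP_add {M : Type*} [AddSemigroup M] {X : Type u} [TopologicalSpace X] [CompactSpace X]
    [T2Space X] (Ts : M → X → X) (hTcont : ∀ s, Continuous (Ts s))
    (hTact : ∀ s t z, Ts s (Ts t z) = Ts (s + t) z) (p q : Ultrafilter M) (x : X) :
    TP Ts (p + q) x = TP Ts p (TP Ts q x) := by
  set z := TP Ts q x
  apply TP_eq
  intro W hW
  rcases mem_nhds_iff.mp hW with ⟨O, hOW, hO, hcO⟩
  rw [Filter.mem_map]
  have h1 : {a : M | Ts a z ∈ O} ∈ p := (tendsto_TP Ts p z) (hO.mem_nhds hcO)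
  have : ∀ᶠ a in ↑p, ∀ᶠ b in ↑q, Ts (a + b) x ∈ O := by
    filter_upwards [h1] with a ha
    have h2 : Filter.Tendsto (fun b => Ts a (Ts b x)) ↑q (nhds (Ts a z)) :=
      ((hTcont a).tendsto z).comp (tendsto_TP Ts q x)
    filter_upwards [h2 (hO.mem_nhds ha)] with b hb
    rw [← hTact]; exact hb
  have h3 : ∀ᶠ m in ↑(p + q), Ts m x ∈ O := (Ultrafilter.eventually_add p q _).mpr this
  exact Filter.mem_of_superset h3 fun m hm => hOW hm

theorem EStar.add_mem {S : AddSubsemigroup T} {e : T} (he : e + e = e)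
    (hl : ∀ t : T, Continuous fun x : T => t + x)
    (hr : ∀ t : T, Continuous fun x : T => x + t)
    {p q : Ultrafilter S} (hp : p ∈ EStar S e) (hq : q ∈ EStar S e) :
    p + q ∈ EStar S e := by
  intro U hU
  rcases mem_nhds_iff.mp hU with ⟨O, hOU, hO, heO⟩
  have key : ∀ᶠ a in ↑p, ∀ᶠ b in ↑q, ((a + b : S) : T) ∈ U := by
    have hV : {t : T | t + e ∈ O} ∈ nhds e := by
      have : IsOpen {t : T | t + e ∈ O} := (hr e).isOpen_preimage O hO
      exact this.mem_nhds (by simpa [he] using heO)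
    filter_upwards [hp _ hV] with a ha
    have hWa : {t : T | (a : T) + t ∈ O} ∈ nhds e :=
      ((hl (a : T)).isOpen_preimage O hO).mem_nhds ha
    filter_upwards [hq _ hWa] with b hb
    exact hOU hb
  exact (Ultrafilter.eventually_add p q _).mpr key

/-- If an idempotent of some minimal left ideal of `e*_S` fixes `x`, then
`x` is uniformly recurrent near `e`. -/
theorem unifRecNear_of_idempotent_fix (S : AddSubsemigroup T) (hdense : Dense (S : Set T))
    (hl : ∀ t : T, Continuous fun x : T => t + x)
    (hr : ∀ t : T, Continuous fun x : T => x + t)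
    (e : T) (he : e + e = e)
    {X : Type u} [TopologicalSpace X] [CompactSpace X] [T2Space X]
    (Ts : S → X → X) (hTcont : ∀ s, Continuous (Ts s))
    (hTact : ∀ s t z, Ts s (Ts t z) = Ts (s + t) z) (x : X)
    (hfix : ∃ L, IsMinimalLeftIdealIn (EStar S e) L ∧
      ∃ u ∈ L, u + u = u ∧ TP Ts u x = x) :
    UnifRecNear S e Ts x := by
  classical
  intro W hW
  set B : Set S := {s : S | Ts s x ∈ W} with hB
  by_contra hsyn
  unfold SyndeticNear at hsyn
  push_neg at hsyn
  obtain ⟨U, hU, hns⟩ := hsyn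
  -- hns : ∀ F, (∀ t ∈ F, ↑t ∈ U) → ∀ V ∈ nhds e, ∃ s, ↑s ∈ V ∧ ∀ t ∈ F, t + s ∉ B
  -- Build the filter of sets containing a "bad" core set.
  set f : Filter S :=
    { sets := {A | ∃ V ∈ nhds e, ∃ F : Finset S, (∀ t ∈ F, (t : T) ∈ U) ∧
        {s : S | (s : T) ∈ V ∧ ∀ t ∈ F, t + s ∉ B} ⊆ A}
      univ_sets := ⟨Set.univ, Filter.univ_mem, ∅, by simp, Set.subset_univ _⟩
      sets_of_superset := by
        rintro A A' ⟨V, hV, F, hF, hsub⟩ hAA'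
        exact ⟨V, hV, F, hF, hsub.trans hAA'⟩
      inter_sets := by
        rintro A A' ⟨V, hV, F, hF, hsub⟩ ⟨V', hV', F', hF', hsub'⟩
        refine ⟨V ∩ V', Filter.inter_mem hV hV', F ∪ F', ?_, ?_⟩
        · intro t ht
          rcases Finset.mem_union.mp ht with h | h
          exacts [hF t h, hF' t h]
        · rintro s ⟨⟨hs1, hs2⟩, hs3⟩
          exact ⟨hsub ⟨hs1, fun t ht => hs3 t (Finset.mem_union_left _ ht)⟩,
            hsub' ⟨hs2, fun t ht => hs3 t (Finset.mem_union_right _ ht)⟩⟩ } with hf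
  have hfne : f.NeBot := by
    refine Filter.neBot_iff.mpr fun hbot => ?_
    have : (∅ : Set S) ∈ f := hbot ▸ Filter.mem_bot
    obtain ⟨V, hV, F, hF, hsub⟩ := this
    obtain ⟨s, hsV, hs⟩ := hns F hF V hV
    exact hsub ⟨hsV, hs⟩
  obtain ⟨q, hqf⟩ := Filter.exists_ultrafilter_le f
  have hqE : q ∈ EStar S e := by
    intro V hV
    exact hqf ⟨V, hV, ∅, by simp, fun s hs => hs.1⟩
  have hqD : ∀ t : S, (t : T) ∈ U → {s : S | t + s ∉ B} ∈ q := by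
    intro t ht
    exact hqf ⟨Set.univ, Filter.univ_mem, {t}, by simpa using ht,
      fun s hs => hs.2 t (Finset.mem_singleton_self t)⟩
  obtain ⟨L, hLmin, u, huL, huu, hux⟩ := hfix
  have huE : u ∈ EStar S e := hLmin.1.2.1 huL
  have hadd : ∀ {a b : Ultrafilter S}, a ∈ EStar S e → b ∈ EStar S e → a + b ∈ EStar S e :=
    fun ha hb => EStar.add_mem he hl hr ha hb
  -- The left ideal (E + q) + u coincides with L.
  set L' : Set (Ultrafilter S) := {r | ∃ p ∈ EStar S e, r = (p + q) + u} with hL'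
  have hL'ideal : IsLeftIdealIn (EStar S e) L' := by
    refine ⟨⟨(u + q) + u, u, huE, rfl⟩, ?_, ?_⟩
    · rintro r ⟨p, hp, rfl⟩
      exact hadd (hadd hp hqE) huE
    · rintro p' hp' r ⟨p, hp, rfl⟩
      exact ⟨p' + p, hadd hp' hp, by rw [← add_assoc, ← add_assoc]⟩
  have hL'sub : L' ⊆ L := by
    rintro r ⟨p, hp, rfl⟩
    exact hLmin.1.2.2 (p + q) (hadd hp hqE) u huL
  have hL'eq : L' = L := hLmin.2 L' hL'ideal hL'sub
  -- obtain p with (p + q) + u = u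
  obtain ⟨p, hpE, hpqu⟩ : ∃ p ∈ EStar S e, u = (p + q) + u := by
    have : u ∈ L' := hL'eq ▸ huL
    exact this
  -- x = TP p (TP q x)
  set z := TP Ts q x with hz
  have hxz : TP Ts p z = x := by
    have h1 : TP Ts ((p + q) + u) x = x := by rw [← hpqu, hux]
    rw [TP_add Ts hTcont hTact, TP_add Ts hTcont hTact, hux] at h1
    exact h1
  -- derive the contradiction
  have hWint : interior W ∈ nhds x := isOpen_interior.mem_nhds
    (mem_interior_iff_mem_nhds.mpr hW)
  have htend : Filter.Tendsto (fun t : S => Ts t z) ↑p (nhds x) := hxz ▸ tendsto_TP Ts p z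
  have hA1 : {t : S | Ts t z ∈ interior W} ∈ p := htend hWint
  have hA2 : {t : S | (t : T) ∈ U} ∈ p := hpE U hU
  obtain ⟨t, ht1, ht2⟩ := Ultrafilter.nonempty_of_mem (Filter.inter_mem hA1 hA2)
  have htq : Filter.Tendsto (fun b : S => Ts t (Ts b x)) ↑q (nhds (Ts t z)) :=
    ((hTcont t).tendsto z).comp (tendsto_TP Ts q x)
  have hC : {b : S | Ts t (Ts b x) ∈ interior W} ∈ q :=
    htq (isOpen_interior.mem_nhds ht1)
  obtain ⟨b, hb1, hb2⟩ := Ultrafilter.nonempty_of_mem (Filter.inter_mem hC (hqD t ht2))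
  exact hb2 (by rw [hB]; exact Set.mem_setOf.mpr (interior_subset (hTact t b x ▸ hb1)))


end NearIdem
end

section
/- Let S be a dense subsemigroup of (T,+), e ∈ E(T), and (X,⟨T_s⟩_{s∈S}) a dynamical system. For every x ∈ X and every neighbourhood W of e, there exists a uniformly recurrent point y near e with y ∈ cl{T_s(x) : s ∈ S ∩ W} such that x and y are proximal near e. -/
open Filter Topology Set

attribute [local instance] Ultrafilter.add Ultrafilter.addSemigroup

universe u

section NearIdem

variable {T : Type u} [AddSemigroup T] [TopologicalSpace T]

section TPHelpers

variable {M : Type*} {X : Type*} [TopologicalSpace X] [CompactSpace X] [T2Space X]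

theorem tp_le_nhds (Ts : M → X → X) (p : Ultrafilter M) (x : X) :
    ↑(p.map fun s => Ts s x) ≤ nhds (TP Ts p x) :=
  Ultrafilter.le_nhds_lim _

theorem tp_eq_iff {Ts : M → X → X} {p : Ultrafilter M} {x c : X} :
    TP Ts p x = c ↔ ↑(p.map fun s => Ts s x) ≤ nhds c := by
  constructor
  · rintro rfl; exact tp_le_nhds Ts p x
  · intro h
    have h1 : Ultrafilter.extend (fun s => Ts s x) p = c := ultrafilter_extend_eq_iff.mpr h
    have h2 : Ultrafilter.extend (fun s => Ts s x) p = TP Ts p x :=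
      ultrafilter_extend_eq_iff.mpr (tp_le_nhds Ts p x)
    rw [← h2, h1]

theorem continuous_tp (Ts : M → X → X) (x : X) :
    Continuous fun p : Ultrafilter M => TP Ts p x := by
  have h : (fun p : Ultrafilter M => TP Ts p x) = Ultrafilter.extend fun s => Ts s x :=
    funext fun p => (ultrafilter_extend_eq_iff.mpr (tp_le_nhds Ts p x)).symm
  rw [h]
  exact continuous_ultrafilter_extend _

theorem mem_of_tp_mem {Ts : M → X → X} {p : Ultrafilter M} {x : X} {O : Set X}
    (hO : IsOpen O) (h : TP Ts p x ∈ O) : {s : M | Ts s x ∈ O} ∈ p := by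
  have h2 := tp_le_nhds Ts p x (hO.mem_nhds h)
  rwa [Ultrafilter.coe_map, Filter.mem_map] at h2

theorem tp_mem_closure {Ts : M → X → X} {p : Ultrafilter M} (x : X) {A : Set M} (hA : A ∈ p) :
    TP Ts p x ∈ closure ((fun s => Ts s x) '' A) :=
  mem_closure_iff_ultrafilter.mpr
    ⟨p.map fun s => Ts s x,
      Ultrafilter.mem_map.mpr (mem_of_superset hA (Set.subset_preimage_image _ A)),
      tp_le_nhds Ts p x⟩

theorem tp_add [AddSemigroup M] {Ts : M → X → X} (hTcont : ∀ s, Continuous (Ts s))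
    (hTact : ∀ s t z, Ts s (Ts t z) = Ts (s + t) z) (p q : Ultrafilter M) (x : X) :
    TP Ts (p + q) x = TP Ts p (TP Ts q x) := by
  apply tp_eq_iff.mpr
  intro O hO
  obtain ⟨O', hO'sub, hO'open, hy⟩ := mem_nhds_iff.mp hO
  have key : ∀ᶠ m in ↑(p + q), Ts m x ∈ O' := by
    rw [Ultrafilter.eventually_add]
    have hp : {a : M | Ts a (TP Ts q x) ∈ O'} ∈ p := mem_of_tp_mem hO'open hy
    filter_upwards [hp] with a ha
    have hq : {b : M | Ts b x ∈ (fun z => Ts a z) ⁻¹' O'} ∈ q :=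
      mem_of_tp_mem (hO'open.preimage (hTcont a)) ha
    filter_upwards [hq] with b hb
    rw [← hTact]
    exact hb
  rw [Ultrafilter.coe_map, Filter.mem_map]
  exact key.mono fun m hm => hO'sub hm

end TPHelpers

variable [T2Space T]

/-- Every point is proximal near `e` to a uniformly recurrent point near `e`
in the closure of its `W`-orbit, for each neighbourhood `W` of `e`. -/
theorem exists_unifRecNear_proximal (S : AddSubsemigroup T) (hdense : Dense (S : Set T))
    (hl : ∀ t : T, Continuous fun x : T => t + x)
    (hr : ∀ t : T, Continuous fun x : T => x + t)
    (e : T) (he : e + e = e)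
    {X : Type u} [TopologicalSpace X] [CompactSpace X] [T2Space X]
    (Ts : S → X → X) (hTcont : ∀ s, Continuous (Ts s))
    (hTact : ∀ s t z, Ts s (Ts t z) = Ts (s + t) z) (x : X) (W : Set T) (hW : W ∈ nhds e) :
    ∃ y : X, UnifRecNear S e Ts y ∧
      y ∈ closure ((fun s : S => Ts s x) '' {s : S | (s : T) ∈ W}) ∧
      ProximalNear S e Ts x y := by
  classical
  set E := EStar S e with hE
  have hEne : E.Nonempty := by
    have hne : (comap ((↑) : S → T) (nhds e)).NeBot := by
      rw [comap_neBot_iff]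
      intro U hU
      obtain ⟨t, htU, htS⟩ := mem_closure_iff_nhds.mp (hdense e) U hU
      exact ⟨⟨t, htS⟩, htU⟩
    refine ⟨Ultrafilter.of (comap ((↑) : S → T) (nhds e)), ?_⟩
    intro U hU
    exact Ultrafilter.of_le _ (preimage_mem_comap hU)
  have hEadd : ∀ p ∈ E, ∀ q ∈ E, p + q ∈ E := by
    intro p hp q hq U hU
    obtain ⟨O, hOU, hOopen, heO⟩ := mem_nhds_iff.mp hU
    have h1 : (fun v : T => v + e) ⁻¹' O ∈ nhds e := by
      have hc : Filter.Tendsto (fun v : T => v + e) (nhds e) (nhds (e + e)) := (hr e).tendsto e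
      rw [he] at hc
      exact hc (hOopen.mem_nhds heO)
    have hp1 : {a : S | (a : T) ∈ (fun v : T => v + e) ⁻¹' O} ∈ p := hp _ h1
    have key : ∀ᶠ c in (↑(p + q) : Filter S), ((c : S) : T) ∈ U := by
      rw [Ultrafilter.eventually_add]
      filter_upwards [hp1] with a ha
      have h2 : (fun b : T => (a : T) + b) ⁻¹' O ∈ nhds e := ((hl (a : T)).tendsto e) (hOopen.mem_nhds ha)
      have hq1 : {b : S | (b : T) ∈ (fun b : T => (a : T) + b) ⁻¹' O} ∈ q := hq _ h2
      filter_upwards [hq1] with b hb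
      exact hOU hb
    exact key
  have hEclosed : IsClosed E := by
    have hEeq : E = ⋂ U ∈ nhds e, {p : Ultrafilter S | {s : S | (s : T) ∈ U} ∈ p} := by
      ext p
      simp only [hE, EStar, Set.mem_setOf_eq, Set.mem_iInter]
    rw [hEeq]
    exact isClosed_biInter fun U _ => ultrafilter_isClosed_basic _
  have hEcomp : IsCompact E := hEclosed.isCompact
  set 𝒮 : Set (Set (Ultrafilter S)) := {L | IsLeftIdealIn E L ∧ IsClosed L} with h𝒮
  obtain ⟨p0, hp0⟩ := hEne
  have hideal : ∀ q ∈ E, IsLeftIdealIn E ((· + q) '' E) ∧ IsClosed ((· + q) '' E) := by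
    intro q hqE
    refine ⟨⟨⟨p0 + q, p0, hp0, rfl⟩, ?_, ?_⟩,
      (hEcomp.image (Ultrafilter.continuous_add_left q)).isClosed⟩
    · rintro _ ⟨r, hr, rfl⟩; exact hEadd r hr q hqE
    · rintro p hp _ ⟨r, hr, rfl⟩
      exact ⟨p + r, hEadd p hp r hr, by exact add_assoc p r q⟩
  have hx0 : ((· + p0) '' E) ∈ 𝒮 := hideal p0 hp0
  have hchain : ∀ c ⊆ 𝒮, IsChain (· ⊆ ·) c → c.Nonempty → ∃ lb ∈ 𝒮, ∀ s ∈ c, lb ⊆ s := by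
    intro c hc hch hcne
    obtain ⟨L1, hL1⟩ := hcne
    refine ⟨⋂₀ c, ⟨⟨?_, ?_, ?_⟩, isClosed_sInter fun t ht => (hc ht).2⟩,
      fun s hs => sInter_subset_of_mem hs⟩
    · rw [sInter_eq_iInter]
      haveI : Nonempty c := ⟨⟨L1, hL1⟩⟩
      apply IsCompact.nonempty_iInter_of_directed_nonempty_isCompact_isClosed
        ((↑) : c → Set (Ultrafilter S))
      · haveI : IsRefl (Set (Ultrafilter S)) (flip (· ⊆ ·)) := ⟨fun _ => Set.Subset.refl _⟩
        exact (IsChain.directedOn hch.symm).directed_val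
      · exact fun i => (hc i.2).1.1
      · exact fun i => (hc i.2).2.isCompact
      · exact fun i => (hc i.2).2
    · intro q hq
      exact (hc hL1).1.2.1 (Set.mem_sInter.mp hq L1 hL1)
    · intro p hp q hq
      rw [Set.mem_sInter] at hq ⊢
      intro t ht
      exact (hc ht).1.2.2 p hp q (hq t ht)
  obtain ⟨L, hLsub, hLmin⟩ := zorn_superset_nonempty 𝒮 hchain _ hx0
  have hL𝒮 : L ∈ 𝒮 := hLmin.prop
  have hLideal : IsLeftIdealIn E L := hL𝒮.1
  have hLclosed : IsClosed L := hL𝒮.2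
  have hmin : IsMinimalLeftIdealIn E L := by
    refine ⟨hLideal, fun L' hL' hsub => ?_⟩
    obtain ⟨q, hq⟩ := hL'.1
    have hq𝒮 : ((· + q) '' E) ∈ 𝒮 := hideal q (hL'.2.1 hq)
    have hsub2 : (· + q) '' E ⊆ L' := by
      rintro _ ⟨r, hr, rfl⟩; exact hL'.2.2 r hr q hq
    have hLle : L ⊆ (· + q) '' E := hLmin.2 hq𝒮 (hsub2.trans hsub)
    exact le_antisymm hsub (hLle.trans hsub2)
  obtain ⟨u, huL, huu⟩ := exists_idempotent_in_compact_add_subsemigroup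
    (fun r => Ultrafilter.continuous_add_left r) L hLideal.1 hLclosed.isCompact
    (fun p hp q hq => hLideal.2.2 p (hLideal.2.1 hp) q hq)
  have huE : u ∈ E := hLideal.2.1 huL
  set y := TP Ts u x with hy
  have hTuy : TP Ts u y = y := by
    rw [hy, ← tp_add hTcont hTact, huu]
  have hsolve : ∀ q ∈ L, ∃ r ∈ E, r + q = u := by
    intro q hq
    have hq𝒮 := hideal q (hLideal.2.1 hq)
    have hsub : (· + q) '' E ⊆ L := by
      rintro _ ⟨r, hr, rfl⟩; exact hLideal.2.2 r hr q hq
    have heqL : (· + q) '' E = L := hmin.2 _ hq𝒮.1 hsub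
    have hu2 : u ∈ (· + q) '' E := by rw [heqL]; exact huL
    obtain ⟨r, hr, hru⟩ := hu2
    exact ⟨r, hr, hru⟩
  refine ⟨y, ?_, tp_mem_closure x (huE W hW), ⟨u, huE, hTuy.symm⟩⟩
  intro W' hW'
  obtain ⟨O, hOW', hOopen, hyO⟩ := mem_nhds_iff.mp hW'
  intro U hU
  have hKcomp : IsCompact ((fun q : Ultrafilter S => TP Ts q y) '' L) :=
    hLclosed.isCompact.image (continuous_tp Ts y)
  have hcover : (fun q : Ultrafilter S => TP Ts q y) '' L ⊆
      ⋃ t : {t : S // (t : T) ∈ U}, Ts (t : S) ⁻¹' O := by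
    rintro _ ⟨q, hqL, rfl⟩
    obtain ⟨r, hrE, hru⟩ := hsolve q hqL
    have h1 : TP Ts r (TP Ts q y) ∈ O := by
      rw [← tp_add hTcont hTact, hru, hTuy]; exact hyO
    have h2 : {s : S | Ts s (TP Ts q y) ∈ O} ∈ r := mem_of_tp_mem hOopen h1
    have h3 : {s : S | (s : T) ∈ U} ∈ r := hrE U hU
    obtain ⟨t, ht⟩ := Ultrafilter.nonempty_of_mem (inter_mem h2 h3)
    exact Set.mem_iUnion.mpr ⟨⟨t, ht.2⟩, ht.1⟩
  obtain ⟨F', hF'⟩ := hKcomp.elim_finite_subcover _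
    (fun t : {t : S // (t : T) ∈ U} => hOopen.preimage (hTcont (t : S))) hcover
  set F : Finset S := F'.image (fun t : {t : S // (t : T) ∈ U} => (t : S)) with hF
  have hFU : ∀ t ∈ F, (t : T) ∈ U := by
    intro t ht
    rw [hF, Finset.mem_image] at ht
    obtain ⟨t', _, rfl⟩ := ht
    exact t'.2
  refine ⟨F, hFU, ?_⟩
  by_contra hcon
  push_neg at hcon
  set C : Set S := {s : S | ∀ t ∈ F, Ts (t + s) y ∉ W'} with hC
  have hneC : (comap ((↑) : S → T) (nhds e) ⊓ 𝓟 C).NeBot := by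
    rw [inf_principal_neBot_iff]
    intro Uset hUset
    obtain ⟨V, hV, hVsub⟩ := mem_comap.mp hUset
    obtain ⟨s, hsV, hsC⟩ := hcon V hV
    exact ⟨s, hVsub hsV, hsC⟩
  set q := Ultrafilter.of (comap ((↑) : S → T) (nhds e) ⊓ 𝓟 C) with hqdef
  have hqE : q ∈ E := fun Uu hUu =>
    Ultrafilter.of_le _ (mem_inf_of_left (preimage_mem_comap hUu))
  have hqC : C ∈ q := Ultrafilter.of_le _ (mem_inf_of_right (mem_principal_self C))
  have hquL : q + u ∈ L := hLideal.2.2 q hqE u huL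
  have hzK : TP Ts (q + u) y ∈ (fun q : Ultrafilter S => TP Ts q y) '' L := ⟨q + u, hquL, rfl⟩
  have hz2 := hF' hzK
  rw [Set.mem_iUnion₂] at hz2
  obtain ⟨t, htF', hto⟩ := hz2
  have heq : TP Ts (q + u) y = TP Ts q y := by
    rw [tp_add hTcont hTact, hTuy]
  rw [heq] at hto
  have hmem : {s : S | Ts s y ∈ Ts (t : S) ⁻¹' O} ∈ q :=
    mem_of_tp_mem (hOopen.preimage (hTcont (t : S))) hto
  obtain ⟨s, hs⟩ := Ultrafilter.nonempty_of_mem (inter_mem hmem hqC)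
  have h1 : Ts ((t : S) + s) y ∈ O := by rw [← hTact]; exact hs.1
  exact hs.2 (t : S) (Finset.mem_image_of_mem _ htF') (hOW' h1)


end NearIdem
end

section
/- Let S be a dense subsemigroup of (T,+), e ∈ E(T), and B ⊆ S. Then B is central near e if and only if there exist a dynamical system (X,⟨T_s⟩_{s∈S}), points x, y ∈ X, and a neighbourhood U of y such that x and y are proximal near e, y is uniformly recurrent near e, and B = {s ∈ S : T_s(x) ∈ U}. -/
open Filter Topology Set

attribute [local instance] Ultrafilter.add Ultrafilter.addSemigroup

universe u

section NearIdem

variable {T : Type u} [AddSemigroup T] [TopologicalSpace T]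

-- ===================== Auxiliary lemmas =====================

namespace NearIdemAux

theorem add_mem_iff {M : Type*} [AddSemigroup M] {A : Set M} {U V : Ultrafilter M} :
    A ∈ U + V ↔ ∀ᶠ a in U, ∀ᶠ b in V, a + b ∈ A := Iff.rfl

theorem pure_add_pure {M : Type*} [AddSemigroup M] (a b : M) :
    (pure a : Ultrafilter M) + pure b = pure (a + b) := by
  apply Ultrafilter.coe_injective
  apply Filter.ext
  intro A
  rw [← eventually_mem_set]
  change (∀ᶠ x in ↑((pure a : Ultrafilter M) + pure b), x ∈ A) ↔ _
  rw [Ultrafilter.eventually_add]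
  simp

theorem ultra_map_add {M N : Type*} [AddSemigroup M] [AddSemigroup N] (f : M → N)
    (hf : ∀ a b, f (a + b) = f a + f b) (U V : Ultrafilter M) :
    (U + V).map f = U.map f + V.map f := by
  apply Ultrafilter.coe_injective
  apply Filter.ext
  intro A
  rw [← eventually_mem_set, ← eventually_mem_set]
  rw [Ultrafilter.coe_map, Filter.eventually_map]
  change (∀ᶠ x in ↑(U + V), f x ∈ A) ↔ (∀ᶠ x in ↑(U.map f + V.map f), x ∈ A)
  rw [Ultrafilter.eventually_add, Ultrafilter.eventually_add]
  simp only [Ultrafilter.coe_map, Filter.eventually_map, hf]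

theorem continuous_pure_add {M : Type*} [AddSemigroup M] (m : M) :
    Continuous (fun q : Ultrafilter M => (pure m : Ultrafilter M) + q) := by
  refine ultrafilterBasis_is_basis.continuous_iff.2 (Set.forall_mem_range.mpr fun s => ?_)
  have h : (fun q : Ultrafilter M => (pure m : Ultrafilter M) + q) ⁻¹' {u | s ∈ u}
      = {u : Ultrafilter M | {b | m + b ∈ s} ∈ u} := by
    ext q
    simp only [Set.mem_preimage, Set.mem_setOf_eq, add_mem_iff]
    simp only [Ultrafilter.coe_pure, Filter.eventually_pure]
    exact Iff.rfl
  rw [h]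
  exact ultrafilter_isOpen_basic _

theorem tendsto_pure_map {α β : Type*} [Nonempty β] (f : α → β) (p : Ultrafilter α) :
    Tendsto (fun a => (pure (f a) : Ultrafilter β)) p (𝓝 (p.map f)) := by
  have h1 : Tendsto (pure : β → Ultrafilter β) (p.map f) (𝓝 (p.map f)) :=
    Ultrafilter.tendsto_pure_self (p.map f)
  have h2 : Tendsto f (↑p) ↑(p.map f) := by
    rw [Ultrafilter.coe_map]; exact Filter.tendsto_map
  exact h1.comp h2

theorem tendsto_TP {M' : Type*} {X : Type*} [TopologicalSpace X] [CompactSpace X]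
    (Ts : M' → X → X) (p : Ultrafilter M') (x : X) :
    Tendsto (fun s => Ts s x) p (𝓝 (TP Ts p x)) := by
  have h := (p.map fun s => Ts s x).le_nhds_lim
  rw [Ultrafilter.coe_map] at h
  exact h

theorem TP_eq {M' : Type*} {X : Type*} [TopologicalSpace X] [CompactSpace X] [T2Space X]
    {Ts : M' → X → X} {p : Ultrafilter M'} {x z : X}
    (h : Tendsto (fun s => Ts s x) p (𝓝 z)) : TP Ts p x = z := by
  have h' : ↑(p.map fun s => Ts s x) ≤ 𝓝 z := by rwa [Ultrafilter.coe_map]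
  exact Ultrafilter.lim_eq_iff_le_nhds.mpr h'

theorem TP_mem {M' : Type*} {X : Type*} [TopologicalSpace X] [CompactSpace X]
    {Ts : M' → X → X} {p : Ultrafilter M'} {x : X} {W : Set X}
    (hW : W ∈ 𝓝 (TP Ts p x)) : {s | Ts s x ∈ W} ∈ p :=
  tendsto_TP Ts p x hW

theorem TP_add {M' : Type*} [AddSemigroup M'] {X : Type*} [TopologicalSpace X] [CompactSpace X]
    [T2Space X] (Ts : M' → X → X) (hc : ∀ s, Continuous (Ts s))
    (hh : ∀ s t z, Ts s (Ts t z) = Ts (s + t) z) (p q : Ultrafilter M') (x : X) :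
    TP Ts (p + q) x = TP Ts p (TP Ts q x) := by
  apply TP_eq
  rw [tendsto_nhds]
  intro W hWopen hWmem
  have h1 : {a : M' | Ts a (TP Ts q x) ∈ W} ∈ p :=
    TP_mem (hWopen.mem_nhds hWmem)
  have : ∀ᶠ a in ↑p, ∀ᶠ b in ↑q, Ts (a + b) x ∈ W := by
    filter_upwards [h1] with a ha
    have h2 : Tendsto (fun b => Ts a (Ts b x)) q (𝓝 (Ts a (TP Ts q x))) :=
      ((hc a).tendsto _).comp (tendsto_TP Ts q x)
    have h3 : ∀ᶠ b in ↑q, Ts a (Ts b x) ∈ W := h2 (hWopen.mem_nhds ha)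
    filter_upwards [h3] with b hb
    rw [← hh]; exact hb
  exact this

theorem TP_fixed_iff {M' : Type*} {X : Type*} [TopologicalSpace X] [CompactSpace X] [T2Space X]
    (Ts : M' → X → X) (p : Ultrafilter M') (y : X) :
    TP Ts p y = y ↔ ∀ W ∈ 𝓝 y, {s | Ts s y ∈ W} ∈ p := by
  constructor
  · intro h W hW
    exact TP_mem (by rwa [h])
  · intro h
    exact TP_eq fun W hW => h W hW

end NearIdemAux

open NearIdemAux

section MoreAux

variable {T : Type u} [AddSemigroup T] [TopologicalSpace T]

theorem syndeticNear_mono {S : AddSubsemigroup T} {e : T} {B1 B2 : Set S} (h : B1 ⊆ B2)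
    (hB : SyndeticNear S e B1) : SyndeticNear S e B2 := by
  intro U hU
  obtain ⟨F, hF, V, hV, hs⟩ := hB U hU
  exact ⟨F, hF, V, hV, fun s hsV => by
    obtain ⟨t, ht, htB⟩ := hs s hsV
    exact ⟨t, ht, h htB⟩⟩

theorem estar_add_mem {S : AddSubsemigroup T} {e : T}
    (hl : ∀ t : T, Continuous fun x : T => t + x)
    (hr : ∀ t : T, Continuous fun x : T => x + t) (he : e + e = e)
    {p q : Ultrafilter S} (hp : p ∈ EStar S e) (hq : q ∈ EStar S e) :
    p + q ∈ EStar S e := by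
  intro U hU
  rw [mem_nhds_iff] at hU
  obtain ⟨U', hU'sub, hU'open, heU'⟩ := hU
  rw [NearIdemAux.add_mem_iff]
  have hV : {s : S | (s : T) ∈ (fun x : T => x + e) ⁻¹' U'} ∈ p := by
    apply hp
    exact ((hr e).isOpen_preimage U' hU'open).mem_nhds (by simp [Set.mem_preimage, he, heU'])
  filter_upwards [hV] with a ha
  have hW : {s : S | (s : T) ∈ (fun x : T => (a : T) + x) ⁻¹' U'} ∈ q := by
    apply hq
    exact ((hl (a : T)).isOpen_preimage U' hU'open).mem_nhds ha
  filter_upwards [hW] with b hb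
  exact hU'sub hb

theorem estar_isClosed (S : AddSubsemigroup T) (e : T) : IsClosed (EStar S e) := by
  have h : EStar S e =
      ⋂ U : {U : Set T // U ∈ 𝓝 e}, {p : Ultrafilter S | {s : S | (s : T) ∈ U.1} ∈ p} := by
    ext p
    simp only [EStar, Set.mem_setOf_eq, Set.mem_iInter, Subtype.forall]
  rw [h]
  exact isClosed_iInter fun U => ultrafilter_isClosed_basic _

/-- Build an ultrafilter in `e*` containing a given family with the finite
intersection property relative to neighbourhood traces. -/
theorem exists_estar_ultra (S : AddSubsemigroup T) (e : T) (C : Set (Set S))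
    (h : ∀ G : Finset (Set S), ↑G ⊆ C → ∀ V ∈ 𝓝 e,
      ({s : S | (s : T) ∈ V} ∩ ⋂₀ (↑G : Set (Set S))).Nonempty) :
    ∃ q : Ultrafilter S, q ∈ EStar S e ∧ ∀ A ∈ C, A ∈ q := by
  classical
  have cond : ∀ Tset : Finset (Set S), (↑Tset : Set (Set S)) ⊆
      ({A | ∃ V ∈ 𝓝 e, A = {s : S | (s : T) ∈ V}} ∪ C) →
      (⋂₀ (↑Tset : Set (Set S))).Nonempty := ?_
  case _ =>
    obtain ⟨F, hF⟩ := Ultrafilter.exists_ultrafilter_of_finite_inter_nonempty _ cond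
    exact ⟨F, fun V hV => hF (Or.inl ⟨V, hV, rfl⟩), fun A hA => hF (Or.inr hA)⟩
  intro Tset hTset
  set G : Finset (Set S) := Tset.filter (· ∈ C) with hGdef
  have hGsub : (↑G : Set (Set S)) ⊆ C := by
    intro A hA
    exact (Finset.mem_filter.mp hA).2
  have key : ∀ A ∈ Tset \ G, ∃ V ∈ 𝓝 e, A = {s : S | (s : T) ∈ V} := by
    intro A hA
    rcases Finset.mem_sdiff.mp hA with ⟨hAT, hAG⟩
    rcases hTset hAT with h1 | h2
    · exact h1
    · exact absurd (Finset.mem_filter.mpr ⟨hAT, h2⟩) hAG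
  set V₀ : Set T := ⋂ A ∈ Tset \ G,
      (if hex : ∃ V ∈ 𝓝 e, A = {s : S | (s : T) ∈ V} then hex.choose else Set.univ) with hV₀def
  have hV₀ : V₀ ∈ 𝓝 e := by
    rw [hV₀def]
    refine (biInter_finset_mem _).2 fun A hA => ?_
    rw [dif_pos (key A hA)]
    exact (key A hA).choose_spec.1
  obtain ⟨x, hxV, hxG⟩ := h G hGsub V₀ hV₀
  refine ⟨x, ?_⟩
  intro A hAT
  by_cases hAC : A ∈ C
  · exact hxG A (Finset.mem_coe.mpr (Finset.mem_filter.mpr ⟨hAT, hAC⟩))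
  · have hA : A ∈ Tset \ G := by
      refine Finset.mem_sdiff.mpr ⟨hAT, fun hc => hAC (Finset.mem_filter.mp hc).2⟩
    have hspec := (key A hA).choose_spec
    rw [hspec.2]
    have : (x : T) ∈ (key A hA).choose := by
      have := Set.mem_setOf_eq ▸ hxV
      have hx' : (x : T) ∈ V₀ := hxV
      rw [hV₀def] at hx'
      have := Set.mem_iInter₂.mp hx' A hA
      rwa [dif_pos (key A hA)] at this
    exact this

/-- The central combinatorial lemma: members (suitably starred) of ultrafilters in a
minimal left ideal of `e*` are syndetic near `e`. -/
theorem key_syndetic {S : AddSubsemigroup T} {e : T}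
    (hl : ∀ t : T, Continuous fun x : T => t + x)
    (hr : ∀ t : T, Continuous fun x : T => x + t) (he : e + e = e)
    {L : Set (Ultrafilter S)} (hL : IsMinimalLeftIdealIn (EStar S e) L)
    {p : Ultrafilter S} (hp : p ∈ L) {C : Set S} (hC : C ∈ p) :
    SyndeticNear S e {s : S | {t : S | s + t ∈ C} ∈ p} := by
  classical
  set Bst : Set S := {s : S | {t : S | s + t ∈ C} ∈ p} with hBstdef
  intro U hU
  by_contra hcon
  push_neg at hcon
  -- build an ultrafilter q in e* avoiding translates
  have cond : ∀ G : Finset (Set S), ↑G ⊆ {A | ∃ t : S, (t : T) ∈ U ∧ A = {s : S | t + s ∉ Bst}} →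
      ∀ V ∈ 𝓝 e, ({s : S | (s : T) ∈ V} ∩ ⋂₀ (↑G : Set (Set S))).Nonempty := by
    intro G hG V hV
    set F : Finset S := G.attach.image (fun A => (hG A.2).choose) with hFdef
    have hF : ∀ t ∈ F, (t : T) ∈ U := by
      intro t ht
      rw [hFdef] at ht
      obtain ⟨A, _, rfl⟩ := Finset.mem_image.mp ht
      exact (hG A.2).choose_spec.1
    obtain ⟨s, hsV, hs⟩ := hcon F hF V hV
    refine ⟨s, hsV, ?_⟩
    intro A hA
    have hA' : A ∈ (↑G : Set (Set S)) := hA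
    have hspec := (hG hA').choose_spec
    rw [hspec.2]
    have htF : (hG hA').choose ∈ F := by
      rw [hFdef]
      exact Finset.mem_image.mpr ⟨⟨A, hA'⟩, Finset.mem_attach _ _, rfl⟩
    exact hs _ htF
  obtain ⟨q, hqE, hqC⟩ := exists_estar_ultra S e
      {A | ∃ t : S, (t : T) ∈ U ∧ A = {s : S | t + s ∉ Bst}} cond
  -- q + p lies in L; the left ideal generated by q + p is L by minimality
  have hqp : q + p ∈ L := hL.1.2.2 q hqE p hp
  set L' : Set (Ultrafilter S) := (fun r => r + (q + p)) '' EStar S e with hL'def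
  have hL'ideal : IsLeftIdealIn (EStar S e) L' := by
    refine ⟨⟨q + (q + p), ⟨q, hqE, rfl⟩⟩, ?_, ?_⟩
    · rintro _ ⟨rr, hrr, rfl⟩
      exact estar_add_mem hl hr he hrr (hL.1.2.1 hqp)
    · rintro rr hrr _ ⟨r', hr', rfl⟩
      exact ⟨rr + r', estar_add_mem hl hr he hrr hr', add_assoc rr r' (q + p)⟩
  have hL'sub : L' ⊆ L := by
    rintro _ ⟨r, hr, rfl⟩
    exact hL.1.2.2 r hr _ hqp
  have hL'eq : L' = L := hL.2 L' hL'ideal hL'sub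
  have hpL' : p ∈ L' := hL'eq ▸ hp
  obtain ⟨r, hrE, hrp⟩ := hpL'
  have hrp' : r + (q + p) = p := hrp
  -- now derive the contradiction
  have hCp : C ∈ r + (q + p) := by rw [hrp']; exact hC
  rw [add_mem_iff] at hCp
  have hUr : {a : S | (a : T) ∈ U} ∈ r := hrE U hU
  have hmix : {a : S | (a : T) ∈ U ∧ ∀ᶠ x in ↑(q + p), a + x ∈ C} ∈ r := by
    have := Filter.inter_mem hUr hCp
    exact this
  obtain ⟨t, htU, htC⟩ := Ultrafilter.nonempty_of_mem hmix
  have htq : {s : S | t + s ∉ Bst} ∈ q := hqC _ ⟨t, htU, rfl⟩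
  rw [Ultrafilter.eventually_add] at htC
  have hmix2 : {b : S | (t + b ∉ Bst) ∧ ∀ᶠ c in ↑p, t + (b + c) ∈ C} ∈ q :=
    Filter.inter_mem htq htC
  obtain ⟨b, hb1, hb2⟩ := Ultrafilter.nonempty_of_mem hmix2
  apply hb1
  rw [hBstdef]
  simp only [Set.mem_setOf_eq]
  have : {c : S | t + (b + c) ∈ C} = {c : S | (t + b) + c ∈ C} := by
    ext c; simp only [Set.mem_setOf_eq, add_assoc]
  rw [← this]
  exact hb2

end MoreAux

variable [T2Space T]

/-- Dynamical characterization of central sets near `e`. -/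
theorem central_near_iff (S : AddSubsemigroup T) (hdense : Dense (S : Set T))
    (hl : ∀ t : T, Continuous fun x : T => t + x)
    (hr : ∀ t : T, Continuous fun x : T => x + t)
    (e : T) (he : e + e = e)
    (B : Set S) :
    (∃ p ∈ SmallestIdeal (EStar S e), p + p = p ∧ B ∈ p) ↔
      ∃ (X : Type u) (_ : TopologicalSpace X) (_ : CompactSpace X) (_ : T2Space X)
        (Ts : S → X → X),
        (∀ s, Continuous (Ts s)) ∧ (∀ s t z, Ts s (Ts t z) = Ts (s + t) z) ∧
        ∃ (x y : X) (U : Set X), U ∈ nhds y ∧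
          ProximalNear S e Ts x y ∧ UnifRecNear S e Ts y ∧
          B = {s : S | Ts s x ∈ U} := by
  constructor
  · rintro ⟨p, ⟨L, hLmin, hpL⟩, hidem, hBp⟩
    classical
    set ι : S → WithZero S := fun s => (s : WithZero S) with hιdef
    have hι_add : ∀ a b : S, ι (a + b) = ι a + ι b := fun a b => WithZero.coe_add a b
    have hι_inj : Function.Injective ι := fun a b h => WithZero.coe_inj.mp h
    refine ⟨Ultrafilter (WithZero S), inferInstance, inferInstance, inferInstance,
      fun s q => (pure (ι s) : Ultrafilter (WithZero S)) + q,
      fun s => NearIdemAux.continuous_pure_add (ι s), ?_, ?_⟩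
    · intro s t z
      show pure (ι s) + (pure (ι t) + z) = pure (ι (s + t)) + z
      rw [← add_assoc, NearIdemAux.pure_add_pure, hι_add]
    set y : Ultrafilter (WithZero S) := p.map ι with hydef
    have hpE : p ∈ EStar S e := hLmin.1.2.1 hpL
    have hx : ∀ s : S,
        (pure (ι s) : Ultrafilter (WithZero S)) + pure (0 : WithZero S) = pure (ι s) := by
      intro s; rw [NearIdemAux.pure_add_pure, add_zero]
    refine ⟨pure (0 : WithZero S), y, {u : Ultrafilter (WithZero S) | ι '' B ∈ u}, ?_, ?_, ?_, ?_⟩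
    · refine (ultrafilter_isOpen_basic _).mem_nhds ?_
      show ι '' B ∈ p.map ι
      rw [Ultrafilter.mem_map, hι_inj.preimage_image]
      exact hBp
    · refine ⟨p, hpE, ?_⟩
      have h1 : TP (fun s q => pure (ι s) + q) p (pure (0 : WithZero S)) = y := by
        apply NearIdemAux.TP_eq
        exact (NearIdemAux.tendsto_pure_map ι p).congr fun s => (hx s).symm
      have h2 : TP (fun s q => pure (ι s) + q) p y = y + y := by
        apply NearIdemAux.TP_eq
        exact ((Ultrafilter.continuous_add_left y).tendsto (p.map ι)).comp
          (NearIdemAux.tendsto_pure_map ι p)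
      have h3 : y + y = y := by
        rw [hydef, ← NearIdemAux.ultra_map_add ι hι_add p p, hidem]
      rw [h1, h2, h3]
    · intro W hW
      obtain ⟨t0, ht0B, hyW, hWsub⟩ := ultrafilterBasis_is_basis.mem_nhds_iff.mp hW
      obtain ⟨A', rfl⟩ := ht0B
      have hC : ι ⁻¹' A' ∈ p := by
        have h' : A' ∈ y := hyW
        rwa [hydef, Ultrafilter.mem_map] at h'
      have hsynd := key_syndetic hl hr he hLmin hpL hC
      refine syndeticNear_mono ?_ hsynd
      intro s hs
      show (pure (ι s) : Ultrafilter (WithZero S)) + y ∈ W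
      apply hWsub
      show A' ∈ (pure (ι s) : Ultrafilter (WithZero S)) + y
      rw [NearIdemAux.add_mem_iff]
      simp only [Ultrafilter.coe_pure, Filter.eventually_pure, hydef, Ultrafilter.coe_map,
        Filter.eventually_map]
      have hs' : {t : S | s + t ∈ ι ⁻¹' A'} ∈ p := hs
      filter_upwards [hs'] with t ht
      rw [← hι_add]
      exact ht
    · ext s
      show s ∈ B ↔ (pure (ι s) : Ultrafilter (WithZero S)) + pure (0 : WithZero S)
        ∈ {u : Ultrafilter (WithZero S) | ι '' B ∈ u}
      rw [hx s]
      simp only [Set.mem_setOf_eq, Ultrafilter.mem_pure]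
      exact (hι_inj.mem_set_image).symm
  · rintro ⟨X, _, _, _, Ts, hcont, hhom, x, y, U, hU, ⟨q0, hq0E, hq0xy⟩, hrec, hBeq⟩
    classical
    have hEadd : ∀ {a b : Ultrafilter S}, a ∈ EStar S e → b ∈ EStar S e →
        a + b ∈ EStar S e := fun ha hb => estar_add_mem hl hr he ha hb
    set ℒ : Set (Ultrafilter S) := (fun r => r + q0) '' EStar S e with hℒdef
    have hℒcompact : IsCompact ℒ :=
      ((estar_isClosed S e).isCompact).image (Ultrafilter.continuous_add_left q0)
    have hℒsub : ℒ ⊆ EStar S e := by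
      rintro _ ⟨r, hrE, rfl⟩; exact hEadd hrE hq0E
    have hℒideal : IsLeftIdealIn (EStar S e) ℒ := by
      refine ⟨⟨q0 + q0, q0, hq0E, rfl⟩, hℒsub, ?_⟩
      rintro r hrE _ ⟨r', hr'E, rfl⟩
      exact ⟨r + r', hEadd hrE hr'E, add_assoc r r' q0⟩
    have hTPagree : ∀ r ∈ ℒ, TP Ts r x = TP Ts r y := by
      rintro _ ⟨r, hrE, rfl⟩
      rw [NearIdemAux.TP_add Ts hcont hhom r q0 x, NearIdemAux.TP_add Ts hcont hhom r q0 y,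
        hq0xy]
    set 𝒮 : Set (Set (Ultrafilter S)) := {N | N ⊆ ℒ ∧ IsClosed N ∧ IsLeftIdealIn (EStar S e) N}
      with h𝒮def
    have hℒ𝒮 : ℒ ∈ 𝒮 := ⟨Set.Subset.rfl, hℒcompact.isClosed, hℒideal⟩
    obtain ⟨N, hNmin⟩ : ∃ N, Minimal (· ∈ 𝒮) N := by
      refine zorn_superset _ fun c hcs hc => ?_
      rcases c.eq_empty_or_nonempty with rfl | hcne
      · exact ⟨ℒ, hℒ𝒮, by simp⟩
      have hne : (⋂₀ c).Nonempty := by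
        rw [Set.sInter_eq_iInter]
        haveI : Nonempty c := hcne.coe_sort
        apply IsCompact.nonempty_iInter_of_directed_nonempty_isCompact_isClosed
        · exact DirectedOn.directed_val (IsChain.directedOn hc.symm)
        · exact fun i => (hcs i.prop).2.2.1
        · exact fun i => ((hcs i.prop).2.1).isCompact
        · exact fun i => (hcs i.prop).2.1
      obtain ⟨t0, ht0⟩ := hcne
      refine ⟨⋂₀ c, ⟨?_, ?_, hne, ?_, ?_⟩, fun s hs => Set.sInter_subset_of_mem hs⟩
      · exact (Set.sInter_subset_of_mem ht0).trans (hcs ht0).1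
      · exact isClosed_sInter fun t ht => (hcs ht).2.1
      · intro pp hpp
        exact (hcs ht0).2.2.2.1 (Set.sInter_subset_of_mem ht0 hpp)
      · intro pp hppE qq hqq
        rw [Set.mem_sInter] at hqq ⊢
        exact fun t ht => (hcs ht).2.2.2.2 pp hppE qq (hqq t ht)
    have hNideal : IsLeftIdealIn (EStar S e) N := hNmin.prop.2.2
    have hNclosed : IsClosed N := hNmin.prop.2.1
    have hNℒ : N ⊆ ℒ := hNmin.prop.1
    have hNmin' : IsMinimalLeftIdealIn (EStar S e) N := by
      refine ⟨hNideal, fun L' hL' hL'N => ?_⟩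
      obtain ⟨q', hq'⟩ := hL'.1
      have hq'E : q' ∈ EStar S e := hL'.2.1 hq'
      have hN'subL' : (fun r => r + q') '' EStar S e ⊆ L' := by
        rintro _ ⟨r, hrE, rfl⟩; exact hL'.2.2 r hrE q' hq'
      have hN'𝒮 : (fun r => r + q') '' EStar S e ∈ 𝒮 := by
        refine ⟨(hN'subL'.trans hL'N).trans hNℒ, ?_, ⟨q' + q', q', hq'E, rfl⟩, ?_, ?_⟩
        · exact (((estar_isClosed S e).isCompact).image
            (Ultrafilter.continuous_add_left q')).isClosed
        · rintro _ ⟨r, hrE, rfl⟩; exact hEadd hrE hq'E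
        · rintro r hrE _ ⟨r', hr'E, rfl⟩; exact ⟨r + r', hEadd hrE hr'E, add_assoc r r' q'⟩
      have hsub : N ⊆ (fun r => r + q') '' EStar S e :=
        hNmin.2 hN'𝒮 (hN'subL'.trans hL'N)
      exact subset_antisymm hL'N (hsub.trans hN'subL')
    obtain ⟨q1, hq1N⟩ := hNideal.1
    have hq1E : q1 ∈ EStar S e := hNideal.2.1 hq1N
    have claimA : ∀ W ∈ 𝓝 y, ∃ r ∈ N, {s : S | Ts s y ∈ W} ∈ r := by
      intro W hW
      set CW := {s : S | Ts s y ∈ W} with hCWdef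
      set D := {t : S | {s : S | t + s ∈ CW} ∈ q1} with hDdef
      have hD : ∀ V ∈ 𝓝 e, ∃ t ∈ D, (t : T) ∈ V := by
        intro V hV
        obtain ⟨F, hF, V', hV', hsyn⟩ := hrec W hW V hV
        have hV'q1 : {s : S | (s : T) ∈ V'} ∈ q1 := hq1E V' hV'
        have hsub : {s : S | (s : T) ∈ V'} ⊆ ⋃ t ∈ (↑F : Set S), {s : S | t + s ∈ CW} := by
          intro s hs
          obtain ⟨t, htF, htB⟩ := hsyn s hs
          exact Set.mem_biUnion htF htB
        have hmem : (⋃ t ∈ (↑F : Set S), {s : S | t + s ∈ CW}) ∈ q1 :=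
          Filter.mem_of_superset hV'q1 hsub
        rw [Ultrafilter.finite_biUnion_mem_iff F.finite_toSet] at hmem
        obtain ⟨t, htF, ht⟩ := hmem
        exact ⟨t, ht, hF t htF⟩
      have cond : ∀ G : Finset (Set S), ↑G ⊆ ({D} : Set (Set S)) → ∀ V ∈ 𝓝 e,
          ({s : S | (s : T) ∈ V} ∩ ⋂₀ (↑G : Set (Set S))).Nonempty := by
        intro G hG V hV
        obtain ⟨t, htD, htV⟩ := hD V hV
        refine ⟨t, htV, ?_⟩
        intro A hA
        have hAD : A = D := hG hA
        rw [hAD]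
        exact htD
      obtain ⟨q2, hq2E, hq2D⟩ := exists_estar_ultra S e {D} cond
      refine ⟨q2 + q1, hNideal.2.2 q2 hq2E q1 hq1N, ?_⟩
      rw [NearIdemAux.add_mem_iff]
      filter_upwards [hq2D D rfl] with t ht
      exact ht
    have claimB : ∃ r ∈ N, ∀ W ∈ 𝓝 y, {s : S | Ts s y ∈ W} ∈ r := by
      have hNcompact : IsCompact N := hNclosed.isCompact
      have h := hNcompact.inter_iInter_nonempty
        (fun W : {W : Set X // W ∈ 𝓝 y} => {r : Ultrafilter S | {s : S | Ts s y ∈ W.1} ∈ r})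
        (fun W => ultrafilter_isClosed_basic _) ?_
      · obtain ⟨r, hrN, hr⟩ := h
        rw [Set.mem_iInter] at hr
        exact ⟨r, hrN, fun W hW => hr ⟨W, hW⟩⟩
      · intro u
        have hW0 : (⋂ i ∈ u, (i : {W : Set X // W ∈ 𝓝 y}).1) ∈ 𝓝 y :=
          (biInter_finset_mem u).2 fun i _ => i.2
        obtain ⟨r, hrN, hrW⟩ := claimA _ hW0
        refine ⟨r, hrN, ?_⟩
        rw [Set.mem_iInter₂]
        intro i hi
        refine Filter.mem_of_superset hrW ?_
        intro s hs
        have := Set.mem_iInter₂.mp hs i hi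
        exact this
    obtain ⟨r0, hr0N, hr0fix⟩ := claimB
    have hr0 : TP Ts r0 y = y := (NearIdemAux.TP_fixed_iff Ts r0 y).mpr hr0fix
    set 𝒜 : Set (Ultrafilter S) := {u ∈ N | TP Ts u y = y} with h𝒜def
    have h𝒜closed : IsClosed 𝒜 := by
      have h𝒜eq : 𝒜 = N ∩ ⋂ W : {W : Set X // W ∈ 𝓝 y},
          {r : Ultrafilter S | {s : S | Ts s y ∈ W.1} ∈ r} := by
        ext u
        simp only [h𝒜def, Set.mem_inter_iff, Set.mem_iInter, Set.mem_setOf_eq, Set.mem_sep_iff]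
        constructor
        · rintro ⟨h1, h2⟩
          exact ⟨h1, fun W => (NearIdemAux.TP_fixed_iff Ts u y).mp h2 W.1 W.2⟩
        · rintro ⟨h1, h2⟩
          exact ⟨h1, (NearIdemAux.TP_fixed_iff Ts u y).mpr fun W hW => h2 ⟨W, hW⟩⟩
      rw [h𝒜eq]
      exact hNclosed.inter (isClosed_iInter fun W => ultrafilter_isClosed_basic _)
    have h𝒜add : ∀ u ∈ 𝒜, ∀ v ∈ 𝒜, u + v ∈ 𝒜 := by
      rintro u ⟨huN, huy⟩ v ⟨hvN, hvy⟩
      refine ⟨hNideal.2.2 u (hNideal.2.1 huN) v hvN, ?_⟩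
      rw [NearIdemAux.TP_add Ts hcont hhom u v y, hvy, huy]
    obtain ⟨p, hp𝒜, hpidem⟩ := exists_idempotent_in_compact_add_subsemigroup
      (fun r => Ultrafilter.continuous_add_left r) 𝒜 ⟨r0, hr0N, hr0⟩ h𝒜closed.isCompact h𝒜add
    refine ⟨p, ⟨N, hNmin', hp𝒜.1⟩, hpidem, ?_⟩
    have hpx : TP Ts p x = y := by
      have h1 : TP Ts p x = TP Ts p y := hTPagree p (hNℒ hp𝒜.1)
      rw [h1, hp𝒜.2]
    have hBmem : {s : S | Ts s x ∈ U} ∈ p := NearIdemAux.TP_mem (by rw [hpx]; exact hU)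
    rw [hBeq]
    exact hBmem

end NearIdem
end
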